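/- Let n ≥ 3 and let ψ : ℝⁿ → ℝⁿ be continuous with compact support. Then ψ satisfies ψ(ϑy) = ϑψ(y) for every ϑ ∈ SO(n) and every y ∈ ℝⁿ \ {0} if and only if there exists a continuous function ξ : (0,∞) → ℝ with bounded support satisfying lim_{t→0⁺} ξ(t)·t = 0 such that ψ(y) = ξ(|y|)·y for every y ∈ ℝⁿ \ {0}. -/

import Mathlib

open Filter Set Module Submodule

section Helpers

variable {E : Type*} [NormedAddCommGroup E] [InnerProductSpace ℝ E] [FiniteDimensional ℝ E]

open scoped RealInnerProductSpace

private lemma detRefl {u : E} (hu : u ≠ 0) :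
    LinearMap.det (reflection (ℝ ∙ u)ᗮ).toLinearMap = -1 := by
  rw [det_reflection, Submodule.orthogonal_orthogonal, finrank_span_singleton hu, pow_one]

omit [FiniteDimensional ℝ E] in
private lemma detTrans (σ τ : E ≃ₗᵢ[ℝ] E) :
    LinearMap.det (σ.trans τ).toLinearMap
      = LinearMap.det τ.toLinearMap * LinearMap.det σ.toLinearMap := by
  have : (σ.trans τ).toLinearMap = τ.toLinearMap ∘ₗ σ.toLinearMap := rfl
  rw [this, LinearMap.det_comp]

private lemma existsOrth (h : 2 < finrank ℝ E) (y w : E) :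
    ∃ u : E, u ≠ 0 ∧ ⟪u, y⟫ = 0 ∧ ⟪u, w⟫ = 0 := by
  classical
  set K := Submodule.span ℝ ({y, w} : Set E) with hK
  have hKfin : finrank ℝ K ≤ 2 := by
    have h1 := finrank_span_finset_le_card (R := ℝ) ({y, w} : Finset E)
    have h2 : ((({y, w} : Finset E) : Set E)).finrank ℝ = finrank ℝ K := by
      rw [hK]; congr 1; simp
    have h3 : ({y, w} : Finset E).card ≤ 2 :=
      (Finset.card_insert_le _ _).trans (by simp)
    omega
  have horth : finrank ℝ K + finrank ℝ Kᗮ = finrank ℝ E := K.finrank_add_finrank_orthogonal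
  have hne : Kᗮ ≠ ⊥ := by
    intro hbot
    rw [hbot, finrank_bot] at horth
    omega
  obtain ⟨u, hu_mem, hu0⟩ := Submodule.exists_mem_ne_zero_of_ne_bot hne
  refine ⟨u, hu0, ?_, ?_⟩
  · have := (Submodule.mem_orthogonal _ u).mp hu_mem y (Submodule.subset_span (by simp))
    rwa [real_inner_comm] at this
  · have := (Submodule.mem_orthogonal _ u).mp hu_mem w (Submodule.subset_span (by simp))
    rwa [real_inner_comm] at this

/-- A vector fixed by every rotation fixing `y` lies in the span of `y`. -/
private lemma memSpanOfFixed (h : 2 < finrank ℝ E) {y v : E}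
    (hfix : ∀ σ : E ≃ₗᵢ[ℝ] E, LinearMap.det σ.toLinearMap = 1 → σ y = y → σ v = v) :
    v ∈ (ℝ ∙ y) := by
  set p : E := (orthogonalProjection (ℝ ∙ y) v : E) with hp
  set w : E := v - p with hwdef
  have hw_mem : w ∈ (ℝ ∙ y)ᗮ := Submodule.sub_starProjection_mem_orthogonal (K := ℝ ∙ y) v
  by_cases hw : w = 0
  · have : v = p := by rw [← sub_eq_zero]; exact hw
    rw [this]; exact (orthogonalProjection (ℝ ∙ y) v).2
  exfalso
  obtain ⟨u, hu0, huy, huw⟩ := existsOrth h y w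
  set ρ₁ := reflection (ℝ ∙ w)ᗮ
  set ρ₂ := reflection (ℝ ∙ u)ᗮ
  set σ := ρ₁.trans ρ₂ with hσ
  have hdet : LinearMap.det σ.toLinearMap = 1 := by
    rw [hσ, detTrans, detRefl hu0, detRefl hw]
    norm_num
  have hyw : ⟪w, y⟫ = 0 := by
    have := hw_mem y (Submodule.mem_span_singleton_self y)
    rwa [real_inner_comm] at this
  have hσy : σ y = y := by
    have h1 : ρ₁ y = y := reflection_mem_subspace_eq_self
      (Submodule.mem_orthogonal_singleton_iff_inner_right.mpr hyw)
    have h2 : ρ₂ y = y := reflection_mem_subspace_eq_self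
      (Submodule.mem_orthogonal_singleton_iff_inner_right.mpr huy)
    simp [hσ, LinearIsometryEquiv.trans_apply, h1, h2]
  have hσw : σ w = -w := by
    have h1 : ρ₁ w = -w := reflection_orthogonalComplement_singleton_eq_neg w
    have h2 : ρ₂ w = w := reflection_mem_subspace_eq_self
      (Submodule.mem_orthogonal_singleton_iff_inner_right.mpr huw)
    simp [hσ, LinearIsometryEquiv.trans_apply, h1, h2]
  have hσp : σ p = p := by
    obtain ⟨c, hc⟩ := Submodule.mem_span_singleton.mp (orthogonalProjection (ℝ ∙ y) v).2
    rw [hp, ← hc, map_smul, hσy]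
  have hσv : σ v = v := hfix σ hdet hσy
  have heq : p - w = p + w := by
    have hv : v = p + w := by rw [hwdef]; abel
    calc p - w = σ v := by rw [hv, map_add, hσp, hσw]; abel
      _ = v := hσv
      _ = p + w := hv
  apply hw
  have hneg : -w = w := by
    have h' : p + -w = p + w := by rw [← sub_eq_add_neg]; exact heq
    exact add_left_cancel h'
  have h2 : (2 : ℝ) • w = 0 := by
    rw [two_smul]; nth_rewrite 1 [← hneg]; exact neg_add_cancel w
  simpa using (smul_eq_zero.mp h2).resolve_left (by norm_num)

/-- Transitivity of the rotation group on spheres. -/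
private lemma existsRot (h : 2 < finrank ℝ E) {y z : E} (hyz : ‖y‖ = ‖z‖) :
    ∃ ϑ : E ≃ₗᵢ[ℝ] E, LinearMap.det ϑ.toLinearMap = 1 ∧ ϑ y = z := by
  by_cases heq : y = z
  · refine ⟨LinearIsometryEquiv.refl ℝ E, ?_, by rw [heq]; rfl⟩
    have : (LinearIsometryEquiv.refl ℝ E).toLinearMap = LinearMap.id := rfl
    rw [this, LinearMap.det_id]
  · obtain ⟨u, hu0, huz, -⟩ := existsOrth h z z
    refine ⟨(reflection (ℝ ∙ (y - z))ᗮ).trans (reflection (ℝ ∙ u)ᗮ), ?_, ?_⟩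
    · rw [detTrans, detRefl hu0, detRefl (sub_ne_zero.mpr heq)]; norm_num
    · have h1 : reflection (ℝ ∙ (y - z))ᗮ y = z := reflection_sub hyz
      have h2 : reflection (ℝ ∙ u)ᗮ z = z := reflection_mem_subspace_eq_self
        (Submodule.mem_orthogonal_singleton_iff_inner_right.mpr huz)
      simp [LinearIsometryEquiv.trans_apply, h1, h2]

end Helpers

open scoped RealInnerProductSpace

theorem stmt1 {n : ℕ} (hn : 3 ≤ n)
    (ψ : EuclideanSpace ℝ (Fin n) → EuclideanSpace ℝ (Fin n))
    (hc : Continuous ψ) (hs : HasCompactSupport ψ) :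
    (∀ ϑ : EuclideanSpace ℝ (Fin n) ≃ₗᵢ[ℝ] EuclideanSpace ℝ (Fin n),
        LinearMap.det (ϑ.toLinearEquiv : EuclideanSpace ℝ (Fin n) →ₗ[ℝ] EuclideanSpace ℝ (Fin n)) = 1 →
        ∀ y : EuclideanSpace ℝ (Fin n), y ≠ 0 → ψ (ϑ y) = ϑ (ψ y)) ↔
      (∃ ξ : ℝ → ℝ, ContinuousOn ξ (Set.Ioi 0) ∧
        (∃ R : ℝ, 0 < R ∧ ∀ t : ℝ, R < t → ξ t = 0) ∧
        Tendsto (fun t : ℝ => ξ t * t) (nhdsWithin 0 (Set.Ioi 0)) (nhds 0) ∧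
        ∀ y : EuclideanSpace ℝ (Fin n), y ≠ 0 → ψ y = ξ ‖y‖ • y) := by
  have h2 : 2 < finrank ℝ (EuclideanSpace ℝ (Fin n)) := by
    rw [finrank_euclideanSpace, Fintype.card_fin]; omega
  constructor
  · intro H
    -- the distinguished direction
    set e : EuclideanSpace ℝ (Fin n) := EuclideanSpace.single (⟨0, by omega⟩ : Fin n) (1 : ℝ) with he_def
    have he : ‖e‖ = 1 := by rw [he_def, EuclideanSpace.norm_single]; norm_num
    have hee : ⟪e, e⟫ = 1 := by
      rw [real_inner_self_eq_norm_sq, he]; norm_num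
    have he0 : e ≠ 0 := by
      intro h0; rw [h0, norm_zero] at he; norm_num at he
    -- ψ 0 = 0
    have hψ0 : ψ 0 = 0 := by
      have hfix : ∀ σ : EuclideanSpace ℝ (Fin n) ≃ₗᵢ[ℝ] EuclideanSpace ℝ (Fin n), LinearMap.det σ.toLinearMap = 1 →
          σ (0 : EuclideanSpace ℝ (Fin n)) = 0 → σ (ψ 0) = ψ 0 := by
        intro σ hσ _
        have hten : Tendsto (fun t : ℝ => t • e) (nhdsWithin 0 (Set.Ioi 0)) (nhds (0 : EuclideanSpace ℝ (Fin n))) := by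
          have : Tendsto (fun t : ℝ => t • e) (nhds 0) (nhds ((0:ℝ) • e)) :=
            (continuous_id.smul continuous_const).tendsto 0
          rw [zero_smul] at this
          exact this.mono_left nhdsWithin_le_nhds
        have h1 : Tendsto (fun t : ℝ => ψ (σ (t • e))) (nhdsWithin 0 (Set.Ioi 0))
            (nhds (ψ (σ 0))) := by
          have := ((hc.comp σ.continuous).tendsto 0).comp hten
          exact this
        have h2' : Tendsto (fun t : ℝ => σ (ψ (t • e))) (nhdsWithin 0 (Set.Ioi 0))
            (nhds (σ (ψ 0))) := by
          have := ((σ.continuous.comp hc).tendsto 0).comp hten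
          exact this
        have heqev : ∀ᶠ t : ℝ in nhdsWithin 0 (Set.Ioi 0),
            ψ (σ (t • e)) = σ (ψ (t • e)) := by
          filter_upwards [self_mem_nhdsWithin] with t ht
          exact H σ hσ (t • e) (smul_ne_zero (ne_of_gt ht) he0)
        have h1' := h1.congr' heqev
        have := tendsto_nhds_unique h1' h2'
        rw [map_zero σ] at this
        exact this.symm
      have := memSpanOfFixed h2 (y := (0 : EuclideanSpace ℝ (Fin n))) (v := ψ 0) hfix
      simpa [Submodule.span_zero_singleton] using this
    -- every value lies on the ray
    have hspan : ∀ y : EuclideanSpace ℝ (Fin n), ∃ a : ℝ, ψ y = a • y := by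
      intro y
      rcases eq_or_ne y 0 with rfl | hy
      · exact ⟨0, by rw [hψ0, zero_smul]⟩
      · have hmem := memSpanOfFixed h2 (y := y) (v := ψ y) ?_
        · obtain ⟨a, ha⟩ := Submodule.mem_span_singleton.mp hmem
          exact ⟨a, ha.symm⟩
        · intro σ hσ hσy
          have := H σ hσ y hy
          rw [hσy] at this
          exact this.symm
    -- transfer along the sphere
    have htrans : ∀ y z : EuclideanSpace ℝ (Fin n), ‖y‖ = ‖z‖ → ∀ a : ℝ, ψ y = a • y → ψ z = a • z := by
      intro y z hyz a ha
      obtain ⟨ϑ, hϑdet, hϑy⟩ := existsRot h2 hyz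
      rcases eq_or_ne y 0 with rfl | hy
      · have hz : z = 0 := by
          rw [norm_zero] at hyz
          exact (norm_eq_zero.mp hyz.symm)
        rw [hz, hψ0, smul_zero]
      · have hEq := H ϑ hϑdet y hy
        rw [hϑy, ha, map_smul, hϑy] at hEq
        exact hEq
    -- define ξ
    set ξ : ℝ → ℝ := fun t => ⟪ψ (t • e), e⟫ / t with hξ_def
    -- ξ t recovers the coefficient for t > 0
    have hξval : ∀ t : ℝ, 0 < t → ∀ a : ℝ, ψ (t • e) = a • (t • e) → ξ t = a := by
      intro t ht a ha
      rw [hξ_def]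
      simp only
      rw [ha, real_inner_smul_left, real_inner_smul_left, hee]
      field_simp
    refine ⟨ξ, ?_, ?_, ?_, ?_⟩
    · -- continuity
      have hsm : Continuous fun t : ℝ => t • e := continuous_id.smul continuous_const
      have hnum : Continuous fun t : ℝ => ⟪ψ (t • e), e⟫ :=
        (hc.comp hsm).inner continuous_const
      exact ContinuousOn.div hnum.continuousOn continuousOn_id
        (fun t ht => ne_of_gt ht)
    · -- bounded support
      obtain ⟨R, hR⟩ := hs.isCompact.isBounded.subset_closedBall 0
      refine ⟨max R 1, lt_of_lt_of_le one_pos (le_max_right _ _), ?_⟩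
      intro t ht
      have ht0 : 0 < t := lt_of_lt_of_le one_pos ((le_max_right R 1).trans ht.le)
      have hnorm : ‖t • e‖ = t := by
        rw [norm_smul, he, mul_one, Real.norm_eq_abs, abs_of_pos ht0]
      have hnot : t • e ∉ tsupport ψ := by
        intro hmem
        have := hR hmem
        rw [Metric.mem_closedBall, dist_zero_right, hnorm] at this
        have : R < R := lt_of_lt_of_le (lt_of_le_of_lt (le_max_left R 1) ht) this
        exact lt_irrefl _ this
      have : ψ (t • e) = 0 := image_eq_zero_of_notMem_tsupport hnot
      rw [hξ_def]
      simp only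
      rw [this, inner_zero_left, zero_div]
    · -- limit at zero
      have hten : Tendsto (fun t : ℝ => t • e) (nhdsWithin 0 (Set.Ioi 0)) (nhds (0 : EuclideanSpace ℝ (Fin n))) := by
        have : Tendsto (fun t : ℝ => t • e) (nhds 0) (nhds ((0:ℝ) • e)) :=
          (continuous_id.smul continuous_const).tendsto 0
        rw [zero_smul] at this
        exact this.mono_left nhdsWithin_le_nhds
      have hlim : Tendsto (fun t : ℝ => ⟪ψ (t • e), e⟫) (nhdsWithin 0 (Set.Ioi 0))
          (nhds (0 : ℝ)) := by
        have h1 : Tendsto (fun t : ℝ => ψ (t • e)) (nhdsWithin 0 (Set.Ioi 0))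
            (nhds (ψ 0)) := by
          have := (hc.tendsto 0).comp hten
          exact this
        rw [hψ0] at h1
        have hin : Continuous fun v : EuclideanSpace ℝ (Fin n) => ⟪v, e⟫ :=
          Continuous.inner continuous_id continuous_const
        have h3 := (hin.tendsto 0).comp h1
        simp only [Function.comp_def] at h3
        rwa [inner_zero_left] at h3
      refine hlim.congr' ?_
      filter_upwards [self_mem_nhdsWithin] with t ht
      rw [hξ_def]
      simp only
      rw [div_mul_cancel₀ _ (ne_of_gt ht)]
    · -- the representation
      intro y hy
      have hty : 0 < ‖y‖ := norm_pos_iff.mpr hy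
      have hze : ‖(‖y‖ • e : EuclideanSpace ℝ (Fin n))‖ = ‖y‖ := by
        rw [norm_smul, he, mul_one, Real.norm_eq_abs, abs_of_pos hty]
      obtain ⟨a, ha⟩ := hspan (‖y‖ • e)
      have hψy : ψ y = a • y := htrans (‖y‖ • e) y (by rw [hze]) a ha
      rw [hξval ‖y‖ hty a ha]
      exact hψy
  · rintro ⟨ξ, -, -, -, hrep⟩ ϑ hϑ y hy
    have hϑy : ϑ y ≠ 0 := by
      intro h0
      exact hy (by simpa using ϑ.injective (h0.trans (map_zero ϑ).symm))
    rw [hrep (ϑ y) hϑy, hrep y hy, ϑ.norm_map, map_smul]
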